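/- Let z be a real number that is not zero and not a negative integer. Then the digamma function satisfies ψ(z) = −1/z − γ + (z/(1+z)) · ∑_{m=0}^{∞} (1)_m (1)_m (1+z)_m / ((2)_m (2+z)_m · m!), where the series on the right converges. -/

import Mathlib

open scoped Nat

/-- Pochhammer symbol (rising factorial) `(x)_k` for a real number `x`. -/
noncomputable def poch (x : ℝ) (k : ℕ) : ℝ := (ascPochhammer ℝ k).eval x

/-- The digamma function `ψ = Γ'/Γ` on the reals. -/
noncomputable def digamma (z : ℝ) : ℝ := deriv Real.Gamma z / Real.Gamma z

open Real Filter Topology Set Asymptotics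

/-- The simplified series term `1/(m+1) - 1/(m+1+z)`. -/
noncomputable def dgTerm (z : ℝ) (m : ℕ) : ℝ := 1/(m+1) - 1/(m+1+z)

lemma dgSummable (z : ℝ) : Summable (dgTerm z) := by
  have hs : Summable (fun n : ℕ => 1 / (n : ℝ) ^ 2) :=
    Real.summable_one_div_nat_pow.mpr one_lt_two
  refine summable_of_isBigO_nat hs ?_
  rw [isBigO_iff]
  refine ⟨4 * (|z| + 1), ?_⟩
  filter_upwards [eventually_ge_atTop (⌈2 * (|z| + 1)⌉₊)] with m hm
  have hm1 : 2 * (|z| + 1) ≤ (m : ℝ) := le_trans (Nat.le_ceil _) (by exact_mod_cast hm)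
  have hz1 : (0:ℝ) < |z| + 1 := by positivity
  have hm0 : (0:ℝ) < m := by nlinarith
  have habs : -(|z|) ≤ z := neg_abs_le z
  have hd : (m : ℝ) / 2 ≤ (m : ℝ) + 1 + z := by nlinarith
  have hd0 : (0:ℝ) < (m:ℝ) + 1 + z := by nlinarith
  have heq : dgTerm z m = z / ((m + 1) * ((m:ℝ) + 1 + z)) := by
    unfold dgTerm; field_simp; ring
  have key : |z| / (((m:ℝ) + 1) * ((m:ℝ) + 1 + z)) ≤ 4 * (|z| + 1) * (1/(m:ℝ)^2) := by
    rw [div_le_iff₀ (by positivity)]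
    have h2 : (m:ℝ)^2/2 ≤ ((m:ℝ)+1)*((m:ℝ)+1+z) := by nlinarith
    have h3 : 4*(|z|+1)*(1/(m:ℝ)^2)*((m:ℝ)^2/2) ≤
        4 * (|z| + 1) * (1/(m:ℝ)^2) * (((m:ℝ)+1)*((m:ℝ)+1+z)) :=
      mul_le_mul_of_nonneg_left h2 (by positivity)
    have h4 : 4*(|z|+1)*(1/(m:ℝ)^2)*((m:ℝ)^2/2) = 2*(|z|+1) := by field_simp; ring
    nlinarith [abs_nonneg z]
  have e1 : ‖dgTerm z m‖ = |z| / (((m:ℝ) + 1) * ((m:ℝ) + 1 + z)) := by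
    rw [heq, Real.norm_eq_abs, abs_div, abs_of_pos (show (0:ℝ) < ((m:ℝ)+1)*((m:ℝ)+1+z) by positivity)]
  have e2 : ‖1 / (m:ℝ)^2‖ = 1/(m:ℝ)^2 := by
    rw [Real.norm_eq_abs, abs_of_pos (by positivity)]
  rw [e1, e2]; exact key

lemma hz_succ {z : ℝ} (hz : ∀ n : ℕ, z ≠ -(n : ℝ)) : ∀ n : ℕ, z + 1 ≠ -(n : ℝ) := by
  intro n h
  have := hz (n+1)
  push_cast at this
  exact this (by linarith)

lemma digamma_rec {z : ℝ} (hz : ∀ n : ℕ, z ≠ -(n : ℝ)) :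
    digamma (z + 1) = digamma z + 1/z := by
  have hz0 : z ≠ 0 := by simpa using hz 0
  have hG : Real.Gamma z ≠ 0 := Real.Gamma_ne_zero (by simpa using hz)
  have hd : DifferentiableAt ℝ Real.Gamma z := Real.differentiableAt_Gamma (by simpa using hz)
  have hd1 : DifferentiableAt ℝ Real.Gamma (z+1) :=
    Real.differentiableAt_Gamma (by simpa using hz_succ hz)
  have hmul : HasDerivAt (fun x => x * Real.Gamma x)
      (1 * Real.Gamma z + z * deriv Real.Gamma z) z :=
    (hasDerivAt_id z).mul hd.hasDerivAt
  have hcomp : HasDerivAt (fun x => Real.Gamma (x+1)) (deriv Real.Gamma (z+1) * 1) z :=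
    by have := HasDerivAt.comp (h := fun x : ℝ => x + 1) z hd1.hasDerivAt ((hasDerivAt_id z).add_const 1); exact this
  have heq : (fun x => Real.Gamma (x+1)) =ᶠ[𝓝 z] fun x => x * Real.Gamma x := by
    filter_upwards [eventually_ne_nhds hz0] with x hx
    exact Real.Gamma_add_one hx
  have hcomp' : HasDerivAt (fun x => x * Real.Gamma x) (deriv Real.Gamma (z+1) * 1) z :=
    hcomp.congr_of_eventuallyEq heq.symm
  have huniq : deriv Real.Gamma (z+1) * 1 = 1 * Real.Gamma z + z * deriv Real.Gamma z :=
    hcomp'.unique hmul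
  have hGadd : Real.Gamma (z+1) = z * Real.Gamma z := Real.Gamma_add_one hz0
  unfold digamma
  rw [hGadd, show deriv Real.Gamma (z+1) = Real.Gamma z + z * deriv Real.Gamma z by linarith]
  field_simp
  ring

lemma digamma_eq_deriv_log {x : ℝ} (hx : 0 < x) :
    digamma x = deriv (Real.log ∘ Real.Gamma) x := by
  have hne : ∀ m : ℕ, x ≠ -(m:ℝ) := fun m h => by
    have : (0:ℝ) ≤ m := Nat.cast_nonneg m
    nlinarith
  rw [Function.comp_def, deriv.log (Real.differentiableAt_Gamma hne)
    (Real.Gamma_pos_of_pos hx).ne']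
  rfl

lemma digamma_bounds {x : ℝ} (hx : 1 < x) :
    Real.log (x - 1) ≤ digamma x ∧ digamma x ≤ Real.log x := by
  set f := Real.log ∘ Real.Gamma with hf
  have hc : ConvexOn ℝ (Set.Ioi 0) f := Real.convexOn_log_Gamma
  have hder : ∀ {y : ℝ}, 0 < y → DifferentiableAt ℝ f y := by
    intro y hy
    have hne : ∀ m : ℕ, y ≠ -(m:ℝ) := fun m h => by
      have : (0:ℝ) ≤ m := Nat.cast_nonneg m; nlinarith
    exact (Real.differentiableAt_Gamma hne).log (Real.Gamma_pos_of_pos hy).ne'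
  have h_rec : ∀ y : ℝ, 0 < y → f (y + 1) = f y + Real.log y := by
    intro y hy
    simp only [hf, Function.comp_apply, Real.Gamma_add_one hy.ne',
      Real.log_mul hy.ne' (Real.Gamma_pos_of_pos hy).ne', add_comm]
  have hx0 : (0:ℝ) < x := by linarith
  have hx1 : (0:ℝ) < x - 1 := by linarith
  rw [digamma_eq_deriv_log hx0, ← hf]
  constructor
  · have h1 := hc.slope_le_deriv (mem_Ioi.mpr hx1) (mem_Ioi.mpr hx0) (by linarith) (hder hx0)
    rwa [slope_def_field, show x - (x-1) = (1:ℝ) by ring, div_one,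
      show x = (x - 1) + 1 by ring, h_rec (x-1) hx1, show x - 1 + 1 - 1 = x - 1 by ring,
      add_sub_cancel_left, show x - 1 + 1 = x by ring] at h1
  · have h1 := hc.deriv_le_slope (mem_Ioi.mpr hx0) (mem_Ioi.mpr (by linarith : (0:ℝ) < x + 1))
      (by linarith) (hder hx0)
    rwa [slope_def_field, show x + 1 - x = (1:ℝ) by ring, div_one, h_rec x hx0,
      add_sub_cancel_left] at h1

lemma tendsto_log_shift (c : ℝ) :
    Tendsto (fun N : ℕ => Real.log ((N:ℝ) + c) - Real.log N) atTop (𝓝 0) := by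
  have h1 : Tendsto (fun N : ℕ => 1 + c / (N:ℝ)) atTop (𝓝 1) := by
    simpa using tendsto_const_nhds.add (tendsto_const_div_atTop_nhds_zero_nat c)
  have h2 : Tendsto (fun N : ℕ => Real.log (1 + c / N)) atTop (𝓝 0) := by
    have := (Real.continuousAt_log one_ne_zero).tendsto.comp h1
    simpa [Function.comp_def] using this
  refine h2.congr' ?_
  filter_upwards [eventually_gt_atTop ⌈|c|⌉₊] with N hN
  have hN0 : (0:ℝ) < N := by
    have : (⌈|c|⌉₊ : ℝ) < N := by exact_mod_cast hN
    have := abs_nonneg c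
    have := Nat.le_ceil |c|
    linarith
  have hNc : (0:ℝ) < (N:ℝ) + c := by
    have h3 : |c| < N := lt_of_le_of_lt (Nat.le_ceil |c|) (by exact_mod_cast hN)
    have := neg_abs_le c
    linarith
  rw [show 1 + c/(N:ℝ) = ((N:ℝ)+c)/N by field_simp,
    Real.log_div hNc.ne' hN0.ne']

lemma pos_ne {w : ℝ} (hw : 0 < w) : ∀ m : ℕ, w ≠ -(m:ℝ) := fun m h => by
  have : (0:ℝ) ≤ m := Nat.cast_nonneg m; nlinarith

lemma digamma_add_nat {w : ℝ} (hw : 0 < w) (N : ℕ) :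
    digamma (w + N) = digamma w + ∑ k ∈ Finset.range N, 1/(w + k) := by
  induction N with
  | zero => simp
  | succ n ih =>
    have hwn : (0:ℝ) < w + n := by positivity
    have h1 : digamma (w + n + 1) = digamma (w + n) + 1/(w + n) := digamma_rec (pos_ne hwn)
    rw [Finset.sum_range_succ, show w + ((n:ℕ)+1 : ℕ) = w + n + 1 by push_cast; ring, h1, ih]
    ring

lemma dg_tsum_pos {z : ℝ} (hz0 : 0 < z) :
    ∑' m, dgTerm z m = Real.eulerMascheroniConstant + digamma z + 1/z := by
  have hsum := dgSummable z
  set γ := Real.eulerMascheroniConstant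
  -- partial sums
  have hS : ∀ N : ℕ, ∑ m ∈ Finset.range N, dgTerm z m
      = ((harmonic N : ℝ) - Real.log N)
        - (digamma (z + 1 + N) - Real.log N) + digamma z + 1/z := by
    intro N
    have h1 : digamma (z + 1 + N) = digamma (z+1) + ∑ k ∈ Finset.range N, 1/(z + 1 + k) :=
      digamma_add_nat (by linarith) N
    have h2 : digamma (z + 1) = digamma z + 1/z := digamma_rec (pos_ne hz0)
    have h3 : (harmonic N : ℝ) = ∑ m ∈ Finset.range N, (1:ℝ)/(m+1) := by
      rw [harmonic]; push_cast; simp [one_div]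
    unfold dgTerm
    rw [Finset.sum_sub_distrib, h3, h1, h2]
    have h4 : ∑ k ∈ Finset.range N, 1/(z + 1 + (k:ℝ)) = ∑ m ∈ Finset.range N, 1/((m:ℝ)+1+z) := by
      apply Finset.sum_congr rfl; intro k _; ring_nf
    rw [h4]; ring
  -- limit of digamma (z+1+N) - log N
  have hlim2 : Tendsto (fun N : ℕ => digamma (z + 1 + N) - Real.log N) atTop (𝓝 0) := by
    apply tendsto_of_tendsto_of_tendsto_of_le_of_le' (tendsto_log_shift z) (tendsto_log_shift (z+1))
    · filter_upwards [eventually_ge_atTop 1] with N hN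
      have hN1 : (1:ℝ) ≤ N := by exact_mod_cast hN
      have hb := (digamma_bounds (show (1:ℝ) < z + 1 + N by linarith)).1
      have : z + 1 + N - 1 = N + z := by ring
      rw [this] at hb
      linarith
    · filter_upwards with N
      have hN0 : (0:ℝ) ≤ N := Nat.cast_nonneg N
      have hb := (digamma_bounds (show (1:ℝ) < z + 1 + N by linarith)).2
      have hlog : Real.log (z + 1 + (N:ℝ)) = Real.log ((N:ℝ) + (z+1)) :=
        congrArg Real.log (by ring)
      linarith
  have hlim : Tendsto (fun N : ℕ => ∑ m ∈ Finset.range N, dgTerm z m) atTop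
      (𝓝 (γ + digamma z + 1/z)) := by
    have := ((Real.tendsto_harmonic_sub_log).sub hlim2).add_const (digamma z + 1/z)
    simp only [sub_zero] at this
    refine Tendsto.congr (fun N => ?_) (by convert this using 2; ring)
    rw [hS N]; ring
  exact tendsto_nhds_unique hsum.hasSum.tendsto_sum_nat hlim

lemma digamma_one : digamma 1 = -Real.eulerMascheroniConstant := by
  unfold digamma
  rw [Real.hasDerivAt_Gamma_one.deriv, Real.Gamma_one, div_one]

lemma tsum_dgTerm_one : ∑' m, dgTerm 1 m = 1 := by
  rw [dg_tsum_pos one_pos, digamma_one]; ring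

lemma dg_shift (z : ℝ) : ∑' m, dgTerm (z+1) m = (∑' m, dgTerm z m) + 1/(1+z) := by
  have h1 : ∀ m : ℕ, dgTerm (z+1) m = dgTerm z (m+1) + dgTerm 1 m := by
    intro m
    unfold dgTerm
    push_cast
    ring
  have h2 : Summable fun m : ℕ => dgTerm z (m+1) := (summable_nat_add_iff 1).mpr (dgSummable z)
  have h0 : ∑' m, dgTerm z m = dgTerm z 0 + ∑' m, dgTerm z (m+1) :=
    Summable.tsum_eq_zero_add (dgSummable z)
  have hd0 : dgTerm z 0 = 1 - 1/(1+z) := by unfold dgTerm; norm_num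
  calc ∑' m, dgTerm (z+1) m = ∑' m, (dgTerm z (m+1) + dgTerm 1 m) := tsum_congr h1
    _ = (∑' m, dgTerm z (m+1)) + ∑' m, dgTerm 1 m := Summable.tsum_add h2 (dgSummable 1)
    _ = (∑' m, dgTerm z m) + 1/(1+z) := by
        rw [tsum_dgTerm_one, h0, hd0]; ring

lemma dg_tsum (z : ℝ) (hz : ∀ n : ℕ, z ≠ -(n : ℝ)) :
    ∑' m, dgTerm z m = Real.eulerMascheroniConstant + digamma z + 1/z := by
  obtain ⟨n, hn⟩ : ∃ n : ℕ, -(n:ℝ) < z := ⟨⌈-z⌉₊ + 1, by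
    push_cast
    have := Nat.le_ceil (-z); linarith⟩
  induction n generalizing z with
  | zero => exact dg_tsum_pos (by simpa using hn)
  | succ n ih =>
    rcases lt_or_ge 0 z with h | h
    · exact dg_tsum_pos h
    · have hz1 : -(n:ℝ) < z + 1 := by push_cast at hn; linarith
      have key := ih (z+1) (hz_succ hz) hz1
      have hrec := digamma_rec hz
      have hz0 : z ≠ 0 := by simpa using hz 0
      have hz1' : 1 + z ≠ 0 := fun h => (hz 1) (by push_cast; linarith)
      rw [dg_shift z, hrec] at key
      have : (1:ℝ)/(z+1) = 1/(1+z) := by ring_nf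
      rw [this] at key
      linarith

lemma poch_zero (x : ℝ) : poch x 0 = 1 := by simp [poch]

lemma poch_succ (x : ℝ) (n : ℕ) : poch x (n+1) = poch x n * (x + n) := by
  unfold poch; rw [ascPochhammer_succ_right]; simp

lemma poch_one (m : ℕ) : poch 1 m = m ! := by simp [poch]

lemma poch_two (m : ℕ) : poch 2 m = (m+1)! := by
  induction m with
  | zero => simp [poch_zero]
  | succ n ih =>
    rw [poch_succ, ih, show (n+1+1)! = (n+2) * (n+1)! from Nat.factorial_succ (n+1)]
    push_cast
    ring

lemma poch_key (z : ℝ) (m : ℕ) : poch (1+z) m * (1+z+m) = (1+z) * poch (2+z) m := by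
  induction m with
  | zero => simp [poch_zero]
  | succ n ih =>
    rw [poch_succ, poch_succ]
    push_cast
    push_cast at ih
    linear_combination (2+z+(n:ℝ)) * ih

lemma poch_ne (z : ℝ) (hz : ∀ n : ℕ, z ≠ -(n : ℝ)) (m : ℕ) : poch (2+z) m ≠ 0 := by
  induction m with
  | zero => simp [poch_zero]
  | succ n ih =>
    rw [poch_succ]
    refine mul_ne_zero ih fun h => hz (n+2) ?_
    push_cast
    linarith

/-- Hypergeometric representation of the digamma function:
`ψ(z) = -1/z - γ + (z/(1+z)) · ₃F₂(1,1,1+z; 2,2+z; 1)`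
for `z` not zero nor a negative integer. -/
theorem digamma_hypergeometric (z : ℝ) (hz : ∀ n : ℕ, z ≠ -(n : ℝ)) :
    Summable (fun m : ℕ =>
        poch 1 m * poch 1 m * poch (1 + z) m / (poch 2 m * poch (2 + z) m * (m)!)) ∧
      digamma z = -1 / z - Real.eulerMascheroniConstant +
        (z / (1 + z)) * ∑' m : ℕ,
          poch 1 m * poch 1 m * poch (1 + z) m / (poch 2 m * poch (2 + z) m * (m)!) := by
  have hz0 : z ≠ 0 := by simpa using hz 0
  have hz1 : 1 + z ≠ 0 := fun h => hz 1 (by push_cast; linarith)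
  have hterm : ∀ m : ℕ,
      poch 1 m * poch 1 m * poch (1 + z) m / (poch 2 m * poch (2 + z) m * (m)!)
        = ((1+z)/z) * dgTerm z m := by
    intro m
    have hm1 : ((m:ℝ)+1) ≠ 0 := by positivity
    have hmz : (1:ℝ)+z+m ≠ 0 := fun h => hz (m+1) (by push_cast; linarith)
    have hfac : ((m)! : ℝ) ≠ 0 := by positivity
    have hp : poch (2+z) m ≠ 0 := poch_ne z hz m
    have key := poch_key z m
    have hmz' : (m:ℝ)+1+z ≠ 0 := fun h => hmz (by linarith)
    have hdg : dgTerm z m = z / (((m:ℝ)+1)*((m:ℝ)+1+z)) := by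
      unfold dgTerm
      field_simp
      ring
    rw [poch_one, poch_two, hdg]
    have hfs : ((m+1)! : ℝ) = ((m:ℝ)+1) * (m)! := by
      rw [Nat.factorial_succ]; push_cast; ring
    rw [hfs]
    have h2 : (1+z)/z * (z/(((m:ℝ)+1)*((m:ℝ)+1+z))) = (1+z)/(((m:ℝ)+1)*((m:ℝ)+1+z)) := by
      field_simp
    rw [h2, div_eq_div_iff
      (mul_ne_zero (mul_ne_zero (mul_ne_zero hm1 hfac) hp) hfac)
      (mul_ne_zero hm1 hmz')]
    linear_combination (((m:ℝ)+1) * (m)! * (m)!) * key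
  refine ⟨(Summable.mul_left _ (dgSummable z)).congr (fun m => (hterm m).symm), ?_⟩
  have ht : ∑' m : ℕ, poch 1 m * poch 1 m * poch (1 + z) m / (poch 2 m * poch (2 + z) m * (m)!)
      = ((1+z)/z) * ∑' m, dgTerm z m := by
    rw [tsum_congr hterm, tsum_mul_left]
  rw [ht, dg_tsum z hz]
  have hc : z / (1+z) * ((1+z)/z * (Real.eulerMascheroniConstant + digamma z + 1/z))
      = Real.eulerMascheroniConstant + digamma z + 1/z := by
    field_simp
  rw [hc]
  ring
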